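/- arXiv:1805.05750 — 3 statements merged into one kernel-verified Lean document; each statement's English description precedes it below -/
import Mathlib

section
/- (Trails telescoping identity) Let X = (X_1, ..., X_n) be a vector of independent, identically distributed random variables over a finite universe U = {x_1, ..., x_c}, and let Hist denote the histogram map. Fix indices j ≠ k, a histogram H, and a length q ≥ 0, and define the trail T = {H - z·e_j + z·e_k : 0 ≤ z ≤ q}. Then for any coordinate i, P(Hist(X) ∈ T | X_i = x_j) − P(Hist(X) ∈ T | X_i = x_k) = P(Hist(X) = H - q·e_j + q·e_k | X_i = x_j) − P(Hist(X) = H | X_i = x_k). -/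
open MeasureTheory ProbabilityTheory
open scoped Classical

/-- Histogram of a finite database: the number of rows holding each value. -/
def hist {ι : Type*} [Fintype ι] {c : ℕ} (ω : ι → Fin c) : Fin c → ℕ :=
  fun j => (Finset.univ.filter fun i => ω i = j).card

/-- The trail with entry `H`, direction `(j,k)` and length `q`, as a set of
(integer-valued) histograms. -/
def trail {c : ℕ} (H : Fin c → ℤ) (j k : Fin c) (q : ℕ) : Set (Fin c → ℤ) :=
  {h | ∃ z : ℕ, z ≤ q ∧
    h = fun b => H b - (z : ℤ) * (if b = j then 1 else 0) + (z : ℤ) * (if b = k then 1 else 0)}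

lemma hist_int {n c : ℕ} (ω : Fin n → Fin c) (b : Fin c) :
    (hist ω b : ℤ) = ∑ x, if ω x = b then 1 else 0 := by
  unfold hist; rw [Finset.card_filter]; push_cast; rfl

lemma hist_update_int {n c : ℕ} (ω : Fin n → Fin c) (i : Fin n) (a b : Fin c) :
    (hist (Function.update ω i a) b : ℤ)
      = (hist ω b : ℤ) + (if a = b then 1 else 0) - (if ω i = b then 1 else 0) := by
  rw [hist_int, hist_int]
  have h1 : ∀ x : Fin n, (if Function.update ω i a x = b then (1:ℤ) else 0)
      = Function.update (fun x => if ω x = b then (1:ℤ) else 0) i (if a = b then 1 else 0) x := by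
    intro x
    rcases eq_or_ne x i with h | h
    · subst h; simp
    · simp [Function.update_of_ne h]
  rw [Finset.sum_congr rfl fun x _ => h1 x, Finset.sum_update_of_mem (Finset.mem_univ i)]
  have h2 : ∑ x : Fin n, (if ω x = b then (1:ℤ) else 0)
      = (if ω i = b then (1:ℤ) else 0) + ∑ x ∈ Finset.univ \ {i}, (if ω x = b then (1:ℤ) else 0) := by
    rw [← Finset.sum_update_of_mem (Finset.mem_univ i)]
    refine Finset.sum_congr rfl fun x _ => ?_
    rcases eq_or_ne x i with h | h
    · subst h; simp
    · simp [Function.update_of_ne h]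
  rw [h2]; ring

lemma pi_apply_finite {n c : ℕ} (ν : Measure (Fin c)) [IsProbabilityMeasure ν]
    (S : Set (Fin n → Fin c)) :
    (Measure.pi fun _ : Fin n => ν) S
      = ∑ ω ∈ Finset.univ.filter (· ∈ S), ∏ x, ν {ω x} := by
  have h1 : S = ⋃ ω ∈ Finset.univ.filter (· ∈ S), {ω} := by ext ω; simp
  nth_rewrite 1 [h1]
  rw [measure_biUnion_finset]
  · exact Finset.sum_congr rfl fun ω _ => by rw [← Set.univ_pi_singleton ω, Measure.pi_pi]
  · intro a _ b _ hab; simp [Set.disjoint_singleton, hab]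
  · intro ω _; exact measurableSet_singleton ω

lemma pi_eval_eq {n c : ℕ} (ν : Measure (Fin c)) [IsProbabilityMeasure ν]
    (i : Fin n) (a : Fin c) :
    (Measure.pi fun _ : Fin n => ν) {ω | ω i = a} = ν {a} := by
  have h1 : {ω : Fin n → Fin c | ω i = a}
      = Set.pi Set.univ (fun x => if x = i then {a} else Set.univ) := by
    ext ω
    simp only [Set.mem_setOf_eq, Set.mem_pi, Set.mem_univ, forall_true_left]
    constructor
    · intro h x; rcases eq_or_ne x i with hx | hx <;> simp [hx, h]
    · intro h; have := h i; simpa using this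
  rw [h1, Measure.pi_pi]
  rw [Finset.prod_eq_single i (fun x _ hx => by simp [hx]) (by simp)]
  simp

/-- Key step: flipping coordinate `i` from `j` to `k`. -/
lemma key_step {n c : ℕ} (ν : Measure (Fin c)) [IsProbabilityMeasure ν]
    (i : Fin n) (j k : Fin c) (hjk : j ≠ k) (t : Fin c → ℤ) :
    (Measure.pi fun _ : Fin n => ν)
        ({ω | ω i = j} ∩ {ω | ∀ b, (hist ω b : ℤ) = t b}) * ν {k}
      = (Measure.pi fun _ : Fin n => ν)
        ({ω | ω i = k} ∩ {ω | ∀ b, (hist ω b : ℤ)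
            = t b - (if b = j then 1 else 0) + (if b = k then 1 else 0)}) * ν {j} := by
  rw [pi_apply_finite, pi_apply_finite, Finset.sum_mul, Finset.sum_mul]
  refine Finset.sum_nbij' (fun ω => Function.update ω i k) (fun ω => Function.update ω i j)
    ?_ ?_ ?_ ?_ ?_
  · intro ω hω
    simp only [Finset.mem_filter, Finset.mem_univ, true_and, Set.mem_inter_iff,
      Set.mem_setOf_eq] at hω ⊢
    obtain ⟨hωi, hh⟩ := hω
    refine ⟨Function.update_self i k ω, fun b => ?_⟩
    rw [hist_update_int, hh b, hωi]
    have e1 : (if k = b then (1:ℤ) else 0) = (if b = k then 1 else 0) := by simp [eq_comm]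
    have e2 : (if j = b then (1:ℤ) else 0) = (if b = j then 1 else 0) := by simp [eq_comm]
    rw [e1, e2]; ring
  · intro ω hω
    simp only [Finset.mem_filter, Finset.mem_univ, true_and, Set.mem_inter_iff,
      Set.mem_setOf_eq] at hω ⊢
    obtain ⟨hωi, hh⟩ := hω
    refine ⟨Function.update_self i j ω, fun b => ?_⟩
    rw [hist_update_int, hh b, hωi]
    have e1 : (if k = b then (1:ℤ) else 0) = (if b = k then 1 else 0) := by simp [eq_comm]
    have e2 : (if j = b then (1:ℤ) else 0) = (if b = j then 1 else 0) := by simp [eq_comm]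
    rw [e1, e2]; ring
  · intro ω hω
    simp only [Finset.mem_filter, Finset.mem_univ, true_and, Set.mem_inter_iff,
      Set.mem_setOf_eq] at hω
    show Function.update (Function.update ω i k) i j = ω
    rw [Function.update_idem, ← hω.1, Function.update_eq_self]
  · intro ω hω
    simp only [Finset.mem_filter, Finset.mem_univ, true_and, Set.mem_inter_iff,
      Set.mem_setOf_eq] at hω
    show Function.update (Function.update ω i j) i k = ω
    rw [Function.update_idem, ← hω.1, Function.update_eq_self]
  · intro ω hω
    simp only [Finset.mem_filter, Finset.mem_univ, true_and, Set.mem_inter_iff,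
      Set.mem_setOf_eq] at hω
    rw [← Finset.mul_prod_erase Finset.univ _ (Finset.mem_univ i),
      ← Finset.mul_prod_erase Finset.univ (fun x => ν {Function.update ω i k x}) (Finset.mem_univ i)]
    have hprod : ∏ x ∈ Finset.univ.erase i, ν {Function.update ω i k x}
        = ∏ x ∈ Finset.univ.erase i, ν {ω x} := by
      refine Finset.prod_congr rfl fun x hx => ?_
      rw [Function.update_of_ne (Finset.ne_of_mem_erase hx)]
    rw [hprod, Function.update_self, hω.1]
    ring

lemma cond_step {n c : ℕ} (ν : Measure (Fin c)) [IsProbabilityMeasure ν]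
    (i : Fin n) (j k : Fin c) (hjk : j ≠ k) (hj : ν {j} ≠ 0) (hk : ν {k} ≠ 0)
    (t : Fin c → ℤ) :
    (Measure.pi fun _ : Fin n => ν)[|{ω | ω i = j}] {ω | ∀ b, (hist ω b : ℤ) = t b}
      = (Measure.pi fun _ : Fin n => ν)[|{ω | ω i = k}]
          {ω | ∀ b, (hist ω b : ℤ)
            = t b - (if b = j then 1 else 0) + (if b = k then 1 else 0)} := by
  have hm : ∀ S : Set (Fin n → Fin c), MeasurableSet S :=
    fun S => (Set.to_countable S).measurableSet
  rw [cond_apply (hm _), cond_apply (hm _), pi_eval_eq, pi_eval_eq]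
  have key := key_step ν i j k hjk t
  have hjt : ν {j} ≠ ⊤ := measure_ne_top ν _
  have hkt : ν {k} ≠ ⊤ := measure_ne_top ν _
  have c1 : (ν {k})⁻¹ * ν {k} = 1 := ENNReal.inv_mul_cancel hk hkt
  have c2 : (ν {j})⁻¹ * ν {j} = 1 := ENNReal.inv_mul_cancel hj hjt
  set A := (Measure.pi fun _ : Fin n => ν)
      ({ω | ω i = j} ∩ {ω | ∀ b, (hist ω b : ℤ) = t b}) with hA
  set B := (Measure.pi fun _ : Fin n => ν)
      ({ω | ω i = k} ∩ {ω | ∀ b, (hist ω b : ℤ)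
        = t b - (if b = j then 1 else 0) + (if b = k then 1 else 0)}) with hB
  calc (ν {j})⁻¹ * A = (ν {j})⁻¹ * A * ((ν {k})⁻¹ * ν {k}) := by rw [c1, mul_one]
    _ = (ν {j})⁻¹ * (ν {k})⁻¹ * (A * ν {k}) := by ring
    _ = (ν {j})⁻¹ * (ν {k})⁻¹ * (B * ν {j}) := by rw [key]
    _ = (ν {k})⁻¹ * B * ((ν {j})⁻¹ * ν {j}) := by ring
    _ = (ν {k})⁻¹ * B := by rw [c2, mul_one]

/-- Auxiliary: the `z`-th histogram on a trail. -/
def trailHist {c : ℕ} (H : Fin c → ℤ) (j k : Fin c) (z : ℕ) : Fin c → ℤ :=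
  fun b => H b - (z : ℤ) * (if b = j then 1 else 0) + (z : ℤ) * (if b = k then 1 else 0)

/-- Auxiliary: the event that the histogram equals the `z`-th trail histogram. -/
def trailEvent (n : ℕ) {c : ℕ} (H : Fin c → ℤ) (j k : Fin c) (z : ℕ) : Set (Fin n → Fin c) :=
  {ω | ∀ b, (hist ω b : ℤ) = trailHist H j k z b}

lemma trailEvent_succ {n c : ℕ} (H : Fin c → ℤ) (j k : Fin c) (z : ℕ) :
    trailEvent n H j k (z + 1)
      = {ω | ∀ b, (hist ω b : ℤ)
          = trailHist H j k z b - (if b = j then 1 else 0) + (if b = k then 1 else 0)} := by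
  ext ω
  simp only [trailEvent, trailHist, Set.mem_setOf_eq]
  refine forall_congr' fun b => ?_
  constructor <;> intro h' <;> rw [h'] <;> push_cast <;> ring

set_option maxHeartbeats 1000000 in
theorem trail_telescoping (n c : ℕ) (ν : Measure (Fin c)) [IsProbabilityMeasure ν]
    (i : Fin n) (j k : Fin c) (hjk : j ≠ k) (hj : ν {j} ≠ 0) (hk : ν {k} ≠ 0)
    (H : Fin c → ℤ) (q : ℕ) :
    ((Measure.pi fun _ : Fin n => ν)[|{ω | ω i = j}]
        {ω | (fun b => (hist ω b : ℤ)) ∈ trail H j k q}).toReal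
      - ((Measure.pi fun _ : Fin n => ν)[|{ω | ω i = k}]
        {ω | (fun b => (hist ω b : ℤ)) ∈ trail H j k q}).toReal
    = ((Measure.pi fun _ : Fin n => ν)[|{ω | ω i = j}]
        {ω | ∀ b, (hist ω b : ℤ)
          = H b - (q : ℤ) * (if b = j then 1 else 0) + (q : ℤ) * (if b = k then 1 else 0)}).toReal
      - ((Measure.pi fun _ : Fin n => ν)[|{ω | ω i = k}]
        {ω | ∀ b, (hist ω b : ℤ) = H b}).toReal := by
  have hm : ∀ S : Set (Fin n → Fin c), MeasurableSet S :=
    fun S => (Set.to_countable S).measurableSet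
  have hAj : (Measure.pi fun _ : Fin n => ν) {ω | ω i = j} ≠ 0 := by
    rw [pi_eval_eq]; exact hj
  have hAk : (Measure.pi fun _ : Fin n => ν) {ω | ω i = k} ≠ 0 := by
    rw [pi_eval_eq]; exact hk
  haveI I1 : IsProbabilityMeasure ((Measure.pi fun _ : Fin n => ν)[|{ω | ω i = j}]) :=
    cond_isProbabilityMeasure hAj
  haveI I2 : IsProbabilityMeasure ((Measure.pi fun _ : Fin n => ν)[|{ω | ω i = k}]) :=
    cond_isProbabilityMeasure hAk
  -- trail decomposition
  have hT : {ω : Fin n → Fin c | (fun b => (hist ω b : ℤ)) ∈ trail H j k q}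
      = ⋃ z ∈ Finset.range (q + 1), trailEvent n H j k z := by
    ext ω
    simp only [Set.mem_setOf_eq, trail, Set.mem_iUnion, Finset.mem_range, Nat.lt_succ_iff,
      funext_iff, trailEvent, trailHist]
    tauto
  have hdisj : (↑(Finset.range (q + 1)) : Set ℕ).PairwiseDisjoint (trailEvent n H j k) := by
    intro z1 _ z2 _ hne
    rw [Function.onFun, Set.disjoint_left]
    intro ω h1 h2
    have e1 := h1 j
    have e2 := h2 j
    simp only [trailHist, eq_self_iff_true, if_true, if_neg hjk, mul_one, mul_zero,
      add_zero] at e1 e2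
    apply hne
    have : (z1 : ℤ) = z2 := by omega
    exact_mod_cast this
  have hsum : ∀ s : Set (Fin n → Fin c),
      ((Measure.pi fun _ : Fin n => ν)[|s]) {ω | (fun b => (hist ω b : ℤ)) ∈ trail H j k q}
        = ∑ z ∈ Finset.range (q + 1),
            ((Measure.pi fun _ : Fin n => ν)[|s]) (trailEvent n H j k z) := by
    intro s
    rw [hT, measure_biUnion_finset hdisj fun z _ => hm _]
  -- step identity
  have hstep : ∀ z : ℕ,
      ((Measure.pi fun _ : Fin n => ν)[|{ω | ω i = j}]) (trailEvent n H j k z)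
        = ((Measure.pi fun _ : Fin n => ν)[|{ω | ω i = k}]) (trailEvent n H j k (z + 1)) := by
    intro z
    rw [trailEvent_succ]
    exact cond_step ν i j k hjk hj hk (trailHist H j k z)
  -- the RHS events
  have hq : {ω : Fin n → Fin c | ∀ b, (hist ω b : ℤ)
      = H b - (q : ℤ) * (if b = j then 1 else 0) + (q : ℤ) * (if b = k then 1 else 0)}
      = trailEvent n H j k q := rfl
  have h0 : {ω : Fin n → Fin c | ∀ b, (hist ω b : ℤ) = H b} = trailEvent n H j k 0 := by
    ext ω
    simp only [trailEvent, trailHist, Set.mem_setOf_eq, Nat.cast_zero, zero_mul, sub_zero,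
      add_zero]
  rw [hsum, hsum, hq, h0]
  rw [ENNReal.toReal_sum (fun z _ => measure_ne_top _ _),
    ENNReal.toReal_sum (fun z _ => measure_ne_top _ _)]
  have hstep' : ∀ z : ℕ,
      (((Measure.pi fun _ : Fin n => ν)[|{ω | ω i = j}]) (trailEvent n H j k z)).toReal
        = (((Measure.pi fun _ : Fin n => ν)[|{ω | ω i = k}]) (trailEvent n H j k (z + 1))).toReal :=
    fun z => by rw [hstep z]
  calc ∑ z ∈ Finset.range (q + 1),
          (((Measure.pi fun _ : Fin n => ν)[|{ω | ω i = j}]) (trailEvent n H j k z)).toReal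
        - ∑ z ∈ Finset.range (q + 1),
          (((Measure.pi fun _ : Fin n => ν)[|{ω | ω i = k}]) (trailEvent n H j k z)).toReal
      = ∑ z ∈ Finset.range (q + 1),
          ((((Measure.pi fun _ : Fin n => ν)[|{ω | ω i = k}]) (trailEvent n H j k (z + 1))).toReal
            - (((Measure.pi fun _ : Fin n => ν)[|{ω | ω i = k}]) (trailEvent n H j k z)).toReal) := by
        rw [Finset.sum_sub_distrib]
        congr 1
        exact Finset.sum_congr rfl fun z _ => hstep' z
    _ = (((Measure.pi fun _ : Fin n => ν)[|{ω | ω i = k}]) (trailEvent n H j k (q + 1))).toReal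
          - (((Measure.pi fun _ : Fin n => ν)[|{ω | ω i = k}]) (trailEvent n H j k 0)).toReal :=
        Finset.sum_range_sub
          (fun z => (((Measure.pi fun _ : Fin n => ν)[|{ω | ω i = k}])
            (trailEvent n H j k z)).toReal) (q + 1)
    _ = (((Measure.pi fun _ : Fin n => ν)[|{ω | ω i = j}]) (trailEvent n H j k q)).toReal
          - (((Measure.pi fun _ : Fin n => ν)[|{ω | ω i = k}]) (trailEvent n H j k 0)).toReal := by
        rw [← hstep' q]
end

section
/- (Simulation-based DDP implies alternative DDP) Suppose database distribution X has independent rows and there exists a simulator Sim such that for all i, all x in the support of X_i, and all measurable S: P(M(X) ∈ S | X_i = x) ≤ e^ε P(Sim(X_{-i}) ∈ S | X_i = x) + δ and P(Sim(X_{-i}) ∈ S | X_i = x) ≤ e^ε P(M(X) ∈ S | X_i = x) + δ. Then for all i, all x, x' in the support of X_i, and all S: P(M(X) ∈ S | X_i = x) ≤ e^{2ε} P(M(X) ∈ S | X_i = x') + (1 + e^ε)δ. -/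
open MeasureTheory ProbabilityTheory

section Aux

variable {U R : Type*} [MeasurableSpace U] [MeasurableSpace R]

/-- Reinsert value `x` at coordinate `i`. -/
noncomputable def embAux (n : ℕ) (i : Fin n) (x : U) :
    ({j : Fin n // j ≠ i} → U) → (Fin n → U) :=
  fun y j => if h : j ≠ i then y ⟨j, h⟩ else x

lemma measurable_embAux (n : ℕ) (i : Fin n) (x : U) : Measurable (embAux n i x) := by
  apply measurable_pi_lambda
  intro j
  by_cases h : j ≠ i
  · simp only [embAux, dif_pos h]
    exact measurable_pi_apply _
  · simp only [embAux, dif_neg h]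
    exact measurable_const

lemma cond_pi_eq_map (n : ℕ) (ν : Fin n → Measure U) [∀ i, IsProbabilityMeasure (ν i)]
    (i : Fin n) (x : U) (hx : ν i {x} ≠ 0) :
    (Measure.pi ν)[|{ω | ω i = x}] =
      Measure.map (embAux n i x) (Measure.pi fun j : {j : Fin n // j ≠ i} => ν j.1) := by
  classical
  haveI : Unique {j : Fin n // ¬ j ≠ i} :=
    ⟨⟨⟨i, not_not_intro rfl⟩⟩, fun j => Subtype.ext (not_not.mp j.2)⟩
  set π : Measure ({j : Fin n // j ≠ i} → U) :=
    Measure.pi fun j : {j : Fin n // j ≠ i} => ν j.1 with hπ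
  set σ : Measure ({j : Fin n // ¬ j ≠ i} → U) :=
    Measure.pi fun j : {j : Fin n // ¬ j ≠ i} => ν j.1 with hσdef
  have hσ : σ ({fun _ => x} : Set ({j : Fin n // ¬ j ≠ i} → U)) = ν i {x} := by
    have hset : ({fun _ => x} : Set ({j : Fin n // ¬ j ≠ i} → U))
        = Set.pi Set.univ (fun _ => ({x} : Set U)) := by
      ext f
      simp only [Set.mem_singleton_iff, Set.mem_pi, Set.mem_univ, forall_true_left]
      constructor
      · intro h j
        rw [h]
      · intro h
        funext j
        exact h j
    rw [hσdef, hset, Measure.pi_pi, Fintype.prod_unique,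
      show ((default : {j : Fin n // ¬ j ≠ i}) : Fin n) = i from
        not_not.mp (default : {j : Fin n // ¬ j ≠ i}).2]
  set E := MeasurableEquiv.piEquivPiSubtypeProd (fun _ : Fin n => U) (fun j => j ≠ i) with hE
  have hmpE := measurePreserving_piEquivPiSubtypeProd ν (fun j : Fin n => j ≠ i)
  have key : ∀ A : Set (Fin n → U), MeasurableSet A →
      Measure.pi ν (A ∩ {ω | ω i = x}) = π (embAux n i x ⁻¹' A) * ν i {x} := by
    intro A hA
    have hset : A ∩ {ω | ω i = x} =
        E ⁻¹' ((embAux n i x ⁻¹' A) ×ˢ ({fun _ => x} : Set ({j : Fin n // ¬ j ≠ i} → U))) := by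
      ext ω
      simp only [Set.mem_inter_iff, Set.mem_setOf_eq, Set.mem_preimage, Set.mem_prod,
        Set.mem_singleton_iff, hE, MeasurableEquiv.piEquivPiSubtypeProd,
        MeasurableEquiv.coe_mk, Equiv.piEquivPiSubtypeProd_apply]
      constructor
      · rintro ⟨hωA, hωi⟩
        refine ⟨?_, ?_⟩
        · have : embAux n i x (fun j : {j : Fin n // j ≠ i} => ω j.1) = ω := by
            funext j
            by_cases h : j ≠ i
            · simp [embAux, h]
            · simp only [embAux, dif_neg h]
              rw [not_not.mp h] at *
              exact hωi.symm
          rw [this]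
          exact hωA
        · funext j
          rw [show (j : Fin n) = i from not_not.mp j.2]
          exact hωi
      · rintro ⟨hωA, hωc⟩
        have hωi : ω i = x := by
          have := congrFun hωc ⟨i, not_not_intro rfl⟩
          exact this
        have : embAux n i x (fun j : {j : Fin n // j ≠ i} => ω j.1) = ω := by
          funext j
          by_cases h : j ≠ i
          · simp [embAux, h]
          · simp only [embAux, dif_neg h]
            rw [not_not.mp h] at *
            exact hωi.symm
        rw [this] at hωA
        exact ⟨hωA, hωi⟩
    rw [hset, ← MeasurableEquiv.map_apply E, hmpE.map_eq, Measure.prod_prod, hσ]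
  have hμs : Measure.pi ν {ω | ω i = x} = ν i {x} := by
    have h := key Set.univ MeasurableSet.univ
    simpa using h
  ext A hA
  rw [ProbabilityTheory.cond, Measure.smul_apply, Measure.restrict_apply hA, smul_eq_mul,
    key A hA, hμs, Measure.map_apply (measurable_embAux n i x) hA,
    mul_comm (π _), ← mul_assoc, ENNReal.inv_mul_cancel hx (measure_ne_top _ _), one_mul]

lemma bind_sim_eq (n : ℕ) (i : Fin n) (x : U)
    (Sim : ({j : Fin n // j ≠ i} → U) → Measure R)
    (π : Measure ({j : Fin n // j ≠ i} → U)) :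
    ((Measure.map (embAux n i x) π).bind fun ω => Sim fun j => ω j.1) = π.bind Sim := by
  set restr : (Fin n → U) → ({j : Fin n // j ≠ i} → U) := fun ω j => ω j.1 with hrestr
  have hrm : Measurable restr := measurable_pi_lambda _ fun j => measurable_pi_apply _
  have hre : ∀ y, restr (embAux n i x y) = y := by
    intro y
    funext j
    simp [restr, embAux, j.2]
  have hmapmap : (Measure.map (embAux n i x) π).map restr = π := by
    rw [Measure.map_map hrm (measurable_embAux n i x)]
    have : restr ∘ embAux n i x = id := funext hre
    rw [this, Measure.map_id]
  show ((Measure.map (embAux n i x) π).map fun ω => Sim (restr ω)).join = (π.map Sim).join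
  congr 1
  by_cases hS : AEMeasurable Sim π
  · have h1 : AEMeasurable Sim ((Measure.map (embAux n i x) π).map restr) := by
      rw [hmapmap]; exact hS
    have h3 := h1.map_map_of_aemeasurable hrm.aemeasurable
    rw [hmapmap] at h3
    have hfun : (fun ω => Sim (restr ω)) = Sim ∘ restr := rfl
    rw [hfun]
    exact h3.symm
  · have hS' : ¬ AEMeasurable (fun ω => Sim (restr ω)) (Measure.map (embAux n i x) π) := by
      intro h
      apply hS
      have hcomp := h.comp_aemeasurable (f := embAux n i x)
        (measurable_embAux n i x).aemeasurable
      have : ((fun ω => Sim (restr ω)) ∘ embAux n i x) = Sim := by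
        funext y
        simp [Function.comp, hre y]
      rwa [this] at hcomp
    rw [Measure.map_of_not_aemeasurable hS', Measure.map_of_not_aemeasurable hS]

end Aux

/-- Simulation-based DDP implies the alternative two-row-values DDP definition
(with doubled ε and blown-up δ), for a database with independent rows. -/
theorem sim_ddp_implies_alt_ddp {U R : Type*} [MeasurableSpace U] [MeasurableSpace R]
    (n : ℕ) (ν : Fin n → Measure U) [∀ i, IsProbabilityMeasure (ν i)]
    (M : (Fin n → U) → Measure R)
    (Sim : (i : Fin n) → ({j : Fin n // j ≠ i} → U) → Measure R)
    (ε δ : ℝ) (hδ : 0 ≤ δ)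
    (hSim : ∀ (i : Fin n) (x : U), ν i {x} ≠ 0 → ∀ S : Set R,
      (((Measure.pi ν)[|{ω | ω i = x}]).bind M) S
          ≤ ENNReal.ofReal (Real.exp ε) *
              (((Measure.pi ν)[|{ω | ω i = x}]).bind fun ω => Sim i fun j => ω j.1) S
            + ENNReal.ofReal δ ∧
        (((Measure.pi ν)[|{ω | ω i = x}]).bind fun ω => Sim i fun j => ω j.1) S
          ≤ ENNReal.ofReal (Real.exp ε) * (((Measure.pi ν)[|{ω | ω i = x}]).bind M) S
            + ENNReal.ofReal δ) :
    ∀ (i : Fin n) (x x' : U), ν i {x} ≠ 0 → ν i {x'} ≠ 0 → ∀ S : Set R,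
      (((Measure.pi ν)[|{ω | ω i = x}]).bind M) S
        ≤ ENNReal.ofReal (Real.exp (2 * ε)) * (((Measure.pi ν)[|{ω | ω i = x'}]).bind M) S
          + ENNReal.ofReal ((1 + Real.exp ε) * δ) := by
  intro i x x' hx hx' S
  obtain ⟨h1, -⟩ := hSim i x hx S
  obtain ⟨-, h2⟩ := hSim i x' hx' S
  have hc : (((Measure.pi ν)[|{ω | ω i = x}]).bind fun ω => Sim i fun j => ω j.1)
      = (((Measure.pi ν)[|{ω | ω i = x'}]).bind fun ω => Sim i fun j => ω j.1) := by
    rw [cond_pi_eq_map n ν i x hx, cond_pi_eq_map n ν i x' hx',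
      bind_sim_eq, bind_sim_eq]
  rw [hc] at h1
  set E := ENNReal.ofReal (Real.exp ε) with hEdef
  set D := ENNReal.ofReal δ with hDdef
  set a' := (((Measure.pi ν)[|{ω | ω i = x'}]).bind M) S with ha'
  calc (((Measure.pi ν)[|{ω | ω i = x}]).bind M) S
      ≤ E * ((((Measure.pi ν)[|{ω | ω i = x'}]).bind fun ω => Sim i fun j => ω j.1) S) + D := h1
    _ ≤ E * (E * a' + D) + D := add_le_add_left (mul_le_mul_right h2 E) D
    _ = ENNReal.ofReal (Real.exp (2 * ε)) * a' + ENNReal.ofReal ((1 + Real.exp ε) * δ) := by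
        rw [mul_add, ← mul_assoc, hEdef, hDdef,
          ← ENNReal.ofReal_mul (Real.exp_nonneg ε), ← Real.exp_add,
          ← ENNReal.ofReal_mul (Real.exp_nonneg ε), add_assoc,
          ← ENNReal.ofReal_add (mul_nonneg (Real.exp_nonneg ε) hδ) hδ]
        congr 2
        · rw [two_mul]
        · ring
end

section
/- (GSR representations are equivalent) Every generalized scoring rule in the (f, g) form — given by f : L(C) → ℝ^K and g mapping weak orders on {1,...,K} to candidates, with winner g(Ord(Σ_{V∈P} f(V))) — can be represented in the (H, g_H) hyperplane form, and conversely. Concretely: (a) given (f, g), define for each pair k_1 ≠ k_2 ≤ K the hyperplane h_{k_1,k_2} ∈ ℝ^{|L(C)|} with coordinate ([f(V)]_{k_1} − [f(V)]_{k_2}) at position V; then the sign vector (Sign(h_{k_1,k_2}·P)) determines the weak order Ord(f(P)), so a suitable g_H reproduces g. (b) Given (H, g_H) with H = {h_1,...,h_R}, define f(V) = (h_1·e_V, ..., h_R·e_V, 0) ∈ ℝ^{R+1}; then the weak order of the components of f(P) determines the sign of each h_k·P (by comparing component k with the last component, which is 0), so a suitable g reproduces g_H. -/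
open Finset

set_option linter.unnecessarySeqFocus false

lemma sign_eq_iff_le (a b : ℝ) (h : SignType.sign a = SignType.sign b) :
    (a ≤ 0 ↔ b ≤ 0) ∧ (0 ≤ a ↔ 0 ≤ b) := by
  rcases lt_trichotomy a 0 with ha | ha | ha <;>
  rcases lt_trichotomy b 0 with hb | hb | hb <;>
  simp_all [sign_neg, sign_pos] <;>
  constructor <;> constructor <;> intro <;> linarith

lemma sign_eq_of_iff (a b : ℝ) (h1 : a ≤ 0 ↔ b ≤ 0) (h2 : 0 ≤ a ↔ 0 ≤ b) :
    SignType.sign a = SignType.sign b := by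
  rcases lt_trichotomy a 0 with ha | ha | ha <;>
  rcases lt_trichotomy b 0 with hb | hb | hb <;>
  simp_all [sign_neg, sign_pos] <;>
  first
  | linarith
  | (exfalso; rcases h1 with ⟨h1a, h1b⟩ <;> rcases h2 with ⟨h2a, h2b⟩ <;>
      (first | linarith [h1a ha.le, h2b hb.le] | linarith [h1b hb.le, h2a ha.le]))

/-- The two representations of generalized scoring rules are equivalent.
(a) A rule factoring through the weak order of `f`-scores factors through the
sign pattern of the difference hyperplanes `h_{k₁,k₂} = (f(·)_{k₁} - f(·)_{k₂})`.
(b) A rule factoring through the sign pattern of hyperplanes `h_1,…,h_R`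
factors through the weak order of the scores `f(V) = (h_1·e_V,…,h_R·e_V, 0)`. -/
theorem gsr_representations_equivalent :
    (∀ (d K : ℕ) (C : Type) (f : Fin d → Fin K → ℝ) (r : (Fin d → ℕ) → C),
      (∀ P Q : Fin d → ℕ,
        (∀ k₁ k₂ : Fin K,
          ((∑ v, f v k₁ * (P v : ℝ)) ≤ (∑ v, f v k₂ * (P v : ℝ)) ↔
            (∑ v, f v k₁ * (Q v : ℝ)) ≤ (∑ v, f v k₂ * (Q v : ℝ)))) → r P = r Q) →
      (∀ P Q : Fin d → ℕ,
        (∀ k₁ k₂ : Fin K,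
          SignType.sign (∑ v, (f v k₁ - f v k₂) * (P v : ℝ)) =
            SignType.sign (∑ v, (f v k₁ - f v k₂) * (Q v : ℝ))) → r P = r Q)) ∧
    (∀ (d R : ℕ) (C : Type) (hs : Fin R → Fin d → ℝ) (r : (Fin d → ℕ) → C),
      (∀ P Q : Fin d → ℕ,
        (∀ k : Fin R,
          SignType.sign (∑ v, hs k v * (P v : ℝ)) =
            SignType.sign (∑ v, hs k v * (Q v : ℝ))) → r P = r Q) →
      (∀ P Q : Fin d → ℕ,
        (∀ k₁ k₂ : Fin (R + 1),
          ((∑ v, (Fin.lastCases (0 : ℝ) (fun j => hs j v) k₁) * (P v : ℝ)) ≤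
              (∑ v, (Fin.lastCases (0 : ℝ) (fun j => hs j v) k₂) * (P v : ℝ)) ↔
            (∑ v, (Fin.lastCases (0 : ℝ) (fun j => hs j v) k₁) * (Q v : ℝ)) ≤
              (∑ v, (Fin.lastCases (0 : ℝ) (fun j => hs j v) k₂) * (Q v : ℝ)))) →
        r P = r Q)) := by
  constructor
  · intro d K C f r hmain P Q hsign
    apply hmain
    intro k₁ k₂
    have key : ∀ (S : Fin d → ℕ),
        (∑ v, (f v k₁ - f v k₂) * (S v : ℝ)) =
          (∑ v, f v k₁ * (S v : ℝ)) - (∑ v, f v k₂ * (S v : ℝ)) := by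
      intro S
      rw [← Finset.sum_sub_distrib]
      exact Finset.sum_congr rfl fun v _ => by ring
    have h := (sign_eq_iff_le _ _ (hsign k₁ k₂)).1
    rw [key P, key Q, sub_nonpos, sub_nonpos] at h
    exact h
  · intro d R C hs r hmain P Q hord
    apply hmain
    intro k
    have h1 := hord k.castSucc (Fin.last R)
    have h2 := hord (Fin.last R) k.castSucc
    simp only [Fin.lastCases_castSucc, Fin.lastCases_last, zero_mul,
      Finset.sum_const_zero] at h1 h2
    exact sign_eq_of_iff _ _ h1 h2
end
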